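/- Faithfulness criterion via a combinatorial section (Krammer's Lemma 3.6): Let B_n act on a set U, and suppose there exist non-empty pairwise disjoint subsets {C_x ⊆ U}_{x ∈ Ω} such that x·C_y ⊆ C_{LF(xy)} for all x, y ∈ Ω. Then the action of B_n on U is faithful. -/

import Mathlib

def braidRels (n : ℕ) : Set (FreeGroup (Fin n)) :=
  {r | (∃ i j : Fin n, (i : ℕ) + 2 ≤ (j : ℕ) ∧
          r = .of i * .of j * (.of i)⁻¹ * (.of j)⁻¹) ∨
       (∃ i j : Fin n, (j : ℕ) = (i : ℕ) + 1 ∧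
          r = .of i * .of j * .of i * (.of j * .of i * .of j)⁻¹)}

abbrev BraidGroup (n : ℕ) : Type := PresentedGroup (braidRels n)

def adjTransposition (n : ℕ) (i : Fin n) : Equiv.Perm (Fin (n + 1)) :=
  Equiv.swap i.castSucc i.succ

noncomputable def wordLen (n : ℕ) (x : Equiv.Perm (Fin (n + 1))) : ℕ :=
  sInf {k | ∃ w : List (Fin n), w.length = k ∧ (w.map (adjTransposition n)).prod = x}

def posBraidMonoid (n : ℕ) : Submonoid (BraidGroup n) :=
  Submonoid.closure (Set.range fun i : Fin n => PresentedGroup.of (rels := braidRels n) i)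

open Equiv Equiv.Perm Fin
namespace KB
variable {n : ℕ}

lemma adj_lt_adj {k : Fin n} {i j : Fin (n+1)} (hij : i < j)
    (hne : ¬(i = k.castSucc ∧ j = k.succ)) :
    adjTransposition n k i < adjTransposition n k j := by
  have hb : (k.succ : ℕ) = (k.castSucc : ℕ) + 1 := by simp
  rw [Fin.lt_iff_val_lt_val] at hij
  rw [not_and_or] at hne
  have h1 : ¬ i = k.castSucc ∨ ¬ j = k.succ := hne
  simp only [adjTransposition, swap_apply_def]
  rw [Fin.lt_iff_val_lt_val]
  simp only [Fin.ext_iff] at h1 ⊢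
  split_ifs <;> (simp only [Fin.ext_iff] at *) <;> omega

lemma adj_mul_self (k : Fin n) : adjTransposition n k * adjTransposition n k = 1 :=
  Equiv.swap_mul_self _ _

lemma mul_adj_mul_adj (w : Perm (Fin (n+1))) (k : Fin n) :
    w * adjTransposition n k * adjTransposition n k = w := by
  rw [mul_assoc, adj_mul_self, mul_one]

lemma adj_adj (k : Fin n) (x : Fin (n+1)) :
    adjTransposition n k (adjTransposition n k x) = x := swap_apply_self _ _ _

lemma adj_ne_one (k : Fin n) : adjTransposition n k ≠ 1 := by
  intro h
  have : adjTransposition n k k.castSucc = k.castSucc := by rw [h]; rfl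
  rw [adjTransposition, swap_apply_left] at this
  exact (castSucc_lt_succ (i := k)).ne' this

def invSet (w : Perm (Fin (n+1))) : Finset (Fin (n+1) × Fin (n+1)) :=
  Finset.univ.filter (fun p => p.1 < p.2 ∧ w p.2 < w p.1)

def invNum (w : Perm (Fin (n+1))) : ℕ := (invSet w).card

lemma mem_invSet {w : Perm (Fin (n+1))} {p : Fin (n+1) × Fin (n+1)} :
    p ∈ invSet w ↔ p.1 < p.2 ∧ w p.2 < w p.1 := by
  simp [invSet]

lemma invSet_maps (w : Perm (Fin (n+1))) (k : Fin n) :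
    ∀ p ∈ (invSet (w * adjTransposition n k)).erase (k.castSucc, k.succ),
      (adjTransposition n k p.1, adjTransposition n k p.2) ∈ (invSet w).erase (k.castSucc, k.succ) := by
  rintro ⟨i, j⟩ hp
  rw [Finset.mem_erase, mem_invSet] at hp
  obtain ⟨hne, hij, hinv⟩ := hp
  have hne' : ¬(i = k.castSucc ∧ j = k.succ) := by
    rintro ⟨h1, h2⟩; exact hne (by simp [h1, h2])
  rw [Finset.mem_erase, mem_invSet]
  refine ⟨?_, adj_lt_adj hij hne', ?_⟩
  · intro hc
    rw [Prod.ext_iff] at hc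
    obtain ⟨h1, h2⟩ := hc
    simp only at h1 h2
    have hi : i = adjTransposition n k k.castSucc := by rw [← h1, adj_adj]
    have hj : j = adjTransposition n k k.succ := by rw [← h2, adj_adj]
    rw [adjTransposition, swap_apply_left] at hi
    rw [adjTransposition, swap_apply_right] at hj
    exact absurd (hi ▸ hj ▸ hij) (castSucc_lt_succ (i := k)).asymm
  · simpa [Perm.mul_apply] using hinv

lemma invNum_erase_eq (w : Perm (Fin (n+1))) (k : Fin n) :
    ((invSet (w * adjTransposition n k)).erase (k.castSucc, k.succ)).card
      = ((invSet w).erase (k.castSucc, k.succ)).card := by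
  have h2 := invSet_maps (w * adjTransposition n k) k
  rw [mul_adj_mul_adj] at h2
  exact Finset.card_nbij'
    (fun p => (adjTransposition n k p.1, adjTransposition n k p.2))
    (fun p => (adjTransposition n k p.1, adjTransposition n k p.2))
    (invSet_maps w k) h2
    (fun p _ => by simp [adj_adj])
    (fun p _ => by simp [adj_adj])

lemma invNum_mul_adj_of_lt {w : Perm (Fin (n+1))} {k : Fin n}
    (h : w k.castSucc < w k.succ) :
    invNum (w * adjTransposition n k) = invNum w + 1 := by
  have hmem : (k.castSucc, k.succ) ∈ invSet (w * adjTransposition n k) := by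
    rw [mem_invSet]
    refine ⟨castSucc_lt_succ (i := k), ?_⟩
    simp only [Perm.mul_apply, adjTransposition, swap_apply_left, swap_apply_right]
    exact h
  have hnmem : (k.castSucc, k.succ) ∉ invSet w := by
    rw [mem_invSet]
    rintro ⟨-, hc⟩; exact hc.asymm h
  have he := invNum_erase_eq w k
  rw [Finset.erase_eq_of_notMem hnmem, Finset.card_erase_of_mem hmem] at he
  have hpos : 0 < (invSet (w * adjTransposition n k)).card := Finset.card_pos.mpr ⟨_, hmem⟩
  unfold invNum
  omega

lemma invNum_mul_adj_of_gt {w : Perm (Fin (n+1))} {k : Fin n}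
    (h : w k.succ < w k.castSucc) :
    invNum w = invNum (w * adjTransposition n k) + 1 := by
  have h' : (w * adjTransposition n k) k.castSucc < (w * adjTransposition n k) k.succ := by
    simpa [Perm.mul_apply, adjTransposition, swap_apply_left, swap_apply_right] using h
  have := invNum_mul_adj_of_lt h'
  rwa [mul_adj_mul_adj] at this

lemma invNum_mul_adj_le (w : Perm (Fin (n+1))) (k : Fin n) :
    invNum (w * adjTransposition n k) ≤ invNum w + 1 := by
  rcases lt_trichotomy (w k.castSucc) (w k.succ) with h | h | h
  · exact (invNum_mul_adj_of_lt h).le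
  · exact absurd (w.injective h) (castSucc_lt_succ (i := k)).ne
  · have := invNum_mul_adj_of_gt h; omega

lemma invNum_one : invNum (1 : Perm (Fin (n+1))) = 0 := by
  unfold invNum
  rw [Finset.card_eq_zero]
  ext p
  simp only [mem_invSet, Finset.notMem_empty, iff_false, Perm.one_apply]
  rintro ⟨h1, h2⟩; exact h1.asymm h2

lemma eq_one_of_no_descent {w : Perm (Fin (n+1))}
    (h : ∀ k : Fin n, w k.castSucc < w k.succ) : w = 1 := by
  have hsm : StrictMono w := Fin.strictMono_iff_lt_succ.mpr h
  have : (w : Fin (n+1) → Fin (n+1)) = id := by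
    apply (hsm.range_inj strictMono_id).mp
    rw [Set.range_id]
    exact w.surjective.range_eq
  ext x
  simp [this]

lemma exists_descent {w : Perm (Fin (n+1))} (h : w ≠ 1) :
    ∃ k : Fin n, w k.succ < w k.castSucc := by
  by_contra hc
  push_neg at hc
  refine h (eq_one_of_no_descent fun k => ?_)
  exact lt_of_le_of_ne (hc k) (fun he => ((castSucc_lt_succ (i := k)).ne (w.injective he)).elim)
  
lemma invNum_prod_le (l : List (Fin n)) :
    invNum ((l.map (adjTransposition n)).prod) ≤ l.length := by
  induction l using List.reverseRecOn with
  | nil => simp [invNum_one]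
  | append_singleton l k ih =>
    rw [List.map_append, List.prod_append, List.map_singleton, List.prod_singleton,
      List.length_append]
    calc invNum ((l.map (adjTransposition n)).prod * adjTransposition n k)
        ≤ invNum ((l.map (adjTransposition n)).prod) + 1 := invNum_mul_adj_le _ _
      _ ≤ l.length + 1 := by omega
      _ = l.length + [k].length := by simp

lemma exists_word (w : Perm (Fin (n+1))) :
    ∃ l : List (Fin n), (l.map (adjTransposition n)).prod = w := by
  have hw : w ∈ Submonoid.closure (Set.range fun i : Fin n => Equiv.swap i.castSucc i.succ) := by
    rw [Equiv.Perm.mclosure_swap_castSucc_succ]; trivial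
  obtain ⟨l, hl, hprod⟩ := Submonoid.exists_list_of_mem_closure hw
  clear hw
  induction l generalizing w with
  | nil => exact ⟨[], by simpa using hprod⟩
  | cons x l ih =>
    obtain ⟨l', hl'⟩ := ih (l.prod) (fun y hy => hl y (List.mem_cons_of_mem x hy)) rfl
    obtain ⟨i, hi⟩ := hl x List.mem_cons_self
    exact ⟨i :: l', by rw [List.map_cons, List.prod_cons, hl', ← hprod, List.prod_cons, ← hi]; rfl⟩

lemma wordSet_nonempty (w : Perm (Fin (n+1))) :
    {k | ∃ l : List (Fin n), l.length = k ∧ (l.map (adjTransposition n)).prod = w}.Nonempty := by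
  obtain ⟨l, hl⟩ := exists_word w
  exact ⟨l.length, l, rfl, hl⟩

lemma wordLen_le_of_word {w : Perm (Fin (n+1))} {l : List (Fin n)}
    (h : (l.map (adjTransposition n)).prod = w) : wordLen n w ≤ l.length :=
  Nat.sInf_le ⟨l, rfl, h⟩

lemma exists_min_word (w : Perm (Fin (n+1))) :
    ∃ l : List (Fin n), l.length = wordLen n w ∧ (l.map (adjTransposition n)).prod = w :=
  Nat.sInf_mem (wordSet_nonempty w)

lemma wordLen_one : wordLen n (1 : Perm (Fin (n+1))) = 0 :=
  Nat.le_zero.mp (wordLen_le_of_word (l := []) (by simp))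

lemma invNum_le_wordLen (w : Perm (Fin (n+1))) : invNum w ≤ wordLen n w := by
  obtain ⟨l, hlen, hprod⟩ := exists_min_word w
  calc invNum w = invNum ((l.map (adjTransposition n)).prod) := by rw [hprod]
    _ ≤ l.length := invNum_prod_le l
    _ = wordLen n w := hlen

lemma wordLen_le_invNum (w : Perm (Fin (n+1))) : wordLen n w ≤ invNum w := by
  suffices h : ∀ N (w : Perm (Fin (n+1))), invNum w ≤ N → wordLen n w ≤ invNum w from
    h (invNum w) w le_rfl
  intro N
  induction N with
  | zero =>
    intro w hw
    have h0 : invNum w = 0 := Nat.le_zero.mp hw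
    have : w = 1 := by
      by_contra hc
      obtain ⟨k, hk⟩ := exists_descent hc
      have := invNum_mul_adj_of_gt hk
      omega
    rw [this, wordLen_one]
    omega
  | succ N ih =>
    intro w hw
    by_cases hc : w = 1
    · rw [hc, wordLen_one]; omega
    · obtain ⟨k, hk⟩ := exists_descent hc
      have hrec := invNum_mul_adj_of_gt hk
      have hih := ih (w * adjTransposition n k) (by omega)
      obtain ⟨l, hlen, hprod⟩ := exists_min_word (w * adjTransposition n k)
      have hword : ((l ++ [k]).map (adjTransposition n)).prod = w := by
        rw [List.map_append, List.prod_append, List.map_singleton, List.prod_singleton, hprod,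
          mul_adj_mul_adj]
      have := wordLen_le_of_word hword
      rw [List.length_append] at this
      simp only [List.length_singleton] at this
      omega

theorem wordLen_eq_invNum (w : Perm (Fin (n+1))) : wordLen n w = invNum w :=
  le_antisymm (wordLen_le_invNum w) (invNum_le_wordLen w)

lemma wordLen_eq_zero_iff {w : Perm (Fin (n+1))} : wordLen n w = 0 ↔ w = 1 := by
  constructor
  · intro h
    rw [wordLen_eq_invNum] at h
    by_contra hc
    obtain ⟨k, hk⟩ := exists_descent hc
    have := invNum_mul_adj_of_gt hk
    omega
  · rintro rfl; exact wordLen_one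

lemma wordLen_adj (k : Fin n) : wordLen n (adjTransposition n k) = 1 := by
  have h1 : wordLen n (adjTransposition n k) ≤ 1 :=
    wordLen_le_of_word (l := [k]) (by simp)
  have h2 : wordLen n (adjTransposition n k) ≠ 0 := fun h =>
    adj_ne_one k (wordLen_eq_zero_iff.mp h)
  omega

lemma wordLen_mul_adj_of_descent {w : Perm (Fin (n+1))} {k : Fin n}
    (h : w k.succ < w k.castSucc) :
    wordLen n w = wordLen n (w * adjTransposition n k) + 1 := by
  rw [wordLen_eq_invNum, wordLen_eq_invNum]
  exact invNum_mul_adj_of_gt h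

lemma prod_reverse_eq_inv (l : List (Fin n)) :
    ((l.reverse.map (adjTransposition n)).prod) = ((l.map (adjTransposition n)).prod)⁻¹ := by
  induction l with
  | nil => simp
  | cons x l ih =>
    rw [List.reverse_cons, List.map_append, List.prod_append, ih]
    simp only [List.map_singleton, List.prod_singleton, List.map_cons, List.prod_cons,
      mul_inv_rev]
    simp [adjTransposition]

lemma wordLen_inv_le (w : Perm (Fin (n+1))) : wordLen n w⁻¹ ≤ wordLen n w := by
  obtain ⟨l, hlen, hprod⟩ := exists_min_word w
  have : ((l.reverse.map (adjTransposition n)).prod) = w⁻¹ := by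
    rw [prod_reverse_eq_inv, hprod]
  have h := wordLen_le_of_word this
  rwa [List.length_reverse, hlen] at h

lemma wordLen_inv (w : Perm (Fin (n+1))) : wordLen n w⁻¹ = wordLen n w :=
  le_antisymm (wordLen_inv_le w) (by simpa using wordLen_inv_le w⁻¹)


variable {n : ℕ}

lemma ell_rels : ∀ r ∈ braidRels n,
    FreeGroup.lift (fun _ : Fin n => Multiplicative.ofAdd (1 : ℤ)) r = 1 := by
  rintro r (⟨i, j, -, rfl⟩ | ⟨i, j, -, rfl⟩) <;>
    simp only [map_mul, map_inv, FreeGroup.lift_apply_of] <;> group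

def ellHom (n : ℕ) : BraidGroup n →* Multiplicative ℤ :=
  PresentedGroup.toGroup ell_rels

def ell (x : BraidGroup n) : ℤ := Multiplicative.toAdd (ellHom n x)

@[simp] lemma ell_one : ell (1 : BraidGroup n) = 0 := by simp [ell, ellHom]

@[simp] lemma ell_mul (x y : BraidGroup n) : ell (x * y) = ell x + ell y := by
  simp [ell, map_mul]

@[simp] lemma ell_of (i : Fin n) : ell (PresentedGroup.of (rels := braidRels n) i) = 1 := by
  simp [ell, ellHom]

lemma ell_nonneg {x : BraidGroup n} (hx : x ∈ posBraidMonoid n) : 0 ≤ ell x := by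
  induction hx using Submonoid.closure_induction with
  | mem x hx => obtain ⟨i, rfl⟩ := hx; simp
  | one => simp
  | mul x y _ _ hx hy => rw [ell_mul]; omega

lemma pos_eq_one_of_ell_eq_zero {x : BraidGroup n} (hx : x ∈ posBraidMonoid n)
    (h : ell x = 0) : x = 1 := by
  induction hx using Submonoid.closure_induction with
  | mem x hx => obtain ⟨i, rfl⟩ := hx; simp at h
  | one => rfl
  | mul x y hx hy ihx ihy =>
    rw [ell_mul] at h
    have h1 := ell_nonneg hx
    have h2 := ell_nonneg hy
    rw [ihx (by omega), ihy (by omega), one_mul]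


section WithR
variable {n : ℕ} {r : Equiv.Perm (Fin (n + 1)) → BraidGroup n}
variable (hr1 : ∀ i : Fin n, r (adjTransposition n i) = PresentedGroup.of i)
variable (hr2 : ∀ x y : Equiv.Perm (Fin (n + 1)),
      wordLen n (x * y) = wordLen n x + wordLen n y → r (x * y) = r x * r y)

lemma of_mem_pos (i : Fin n) : PresentedGroup.of (rels := braidRels n) i ∈ posBraidMonoid n :=
  Submonoid.subset_closure ⟨i, rfl⟩

include hr2 in
lemma r_one : r 1 = 1 := by
  have h := hr2 1 1 (by rw [mul_one, wordLen_one])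
  rw [mul_one] at h
  exact (left_eq_mul.mp h)

include hr1 hr2 in
lemma r_mem_pos_and_ell : ∀ w : Perm (Fin (n+1)),
    r w ∈ posBraidMonoid n ∧ ell (r w) = (wordLen n w : ℤ) := by
  suffices h : ∀ N, ∀ w : Perm (Fin (n+1)), wordLen n w ≤ N →
      r w ∈ posBraidMonoid n ∧ ell (r w) = (wordLen n w : ℤ) from
    fun w => h (wordLen n w) w le_rfl
  intro N
  induction N with
  | zero =>
    intro w hw
    have h1 : w = 1 := wordLen_eq_zero_iff.mp (Nat.le_zero.mp hw)
    subst h1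
    rw [r_one hr2, wordLen_one]
    exact ⟨one_mem _, by simp⟩
  | succ N ih =>
    intro w hw
    by_cases hc : w = 1
    · subst hc
      rw [r_one hr2, wordLen_one]
      exact ⟨one_mem _, by simp⟩
    · have hwinv : w⁻¹ ≠ 1 := fun h => hc (by simpa using congrArg (·⁻¹) h)
      obtain ⟨k, hk⟩ := exists_descent hwinv
      have hlen : wordLen n w⁻¹ = wordLen n (w⁻¹ * adjTransposition n k) + 1 :=
        wordLen_mul_adj_of_descent hk
      set w' := adjTransposition n k * w with hw'
      have hinv : (w⁻¹ * adjTransposition n k)⁻¹ = w' := by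
        rw [mul_inv_rev, inv_inv, hw', adjTransposition, Equiv.swap_inv]
      have hlw' : wordLen n w' = wordLen n w - 1 ∧ 1 ≤ wordLen n w := by
        have h1 := wordLen_inv w
        have h2 : wordLen n w' = wordLen n (w⁻¹ * adjTransposition n k) := by
          rw [← hinv, wordLen_inv]
        omega
      have hsplit : wordLen n (adjTransposition n k * w') = wordLen n (adjTransposition n k) + wordLen n w' := by
        have : adjTransposition n k * w' = w := by
          rw [hw', ← mul_assoc, adj_mul_self, one_mul]
        rw [this, wordLen_adj]
        omega
      have hww : adjTransposition n k * w' = w := by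
        rw [hw', ← mul_assoc, adj_mul_self, one_mul]
      have hr := hr2 (adjTransposition n k) w' hsplit
      rw [hww, hr1 k] at hr
      obtain ⟨hpos', hell'⟩ := ih w' (by omega)
      constructor
      · rw [hr]; exact mul_mem (of_mem_pos k) hpos'
      · rw [hr, ell_mul, ell_of, hell']
        push_cast
        omega

include hr1 hr2 in
lemma r_mem_pos (w : Perm (Fin (n+1))) : r w ∈ posBraidMonoid n :=
  (r_mem_pos_and_ell hr1 hr2 w).1

include hr1 hr2 in
lemma ell_r (w : Perm (Fin (n+1))) : ell (r w) = (wordLen n w : ℤ) :=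
  (r_mem_pos_and_ell hr1 hr2 w).2

-- the half twist
lemma w0_mul_adj_eq (i : Fin n) :
    (Fin.revPerm : Perm (Fin (n+1))) * adjTransposition n i
      = adjTransposition n i.rev * Fin.revPerm := by
  have h := (swap_apply_apply (Fin.revPerm : Perm (Fin (n+1))) i.castSucc i.succ).symm
  have h2 : (Fin.revPerm : Perm (Fin (n+1))) i.castSucc = i.rev.succ := by
    simp [Fin.rev_castSucc]
  have h3 : (Fin.revPerm : Perm (Fin (n+1))) i.succ = i.rev.castSucc := by
    simp [Fin.rev_succ]
  calc (Fin.revPerm : Perm (Fin (n+1))) * adjTransposition n i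
      = Fin.revPerm * Equiv.swap i.castSucc i.succ * Fin.revPerm⁻¹ * Fin.revPerm := by
        rw [adjTransposition]; group
    _ = Equiv.swap ((Fin.revPerm : Perm (Fin (n+1))) i.castSucc)
          ((Fin.revPerm : Perm (Fin (n+1))) i.succ) * Fin.revPerm := by rw [h]
    _ = adjTransposition n i.rev * Fin.revPerm := by
        rw [h2, h3, adjTransposition, Equiv.swap_comm]

lemma w0_descent (k : Fin n) :
    (Fin.revPerm : Perm (Fin (n+1))) k.succ < (Fin.revPerm : Perm (Fin (n+1))) k.castSucc := by
  simp only [Fin.revPerm_apply]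
  rw [Fin.rev_lt_rev]
  exact castSucc_lt_succ (i := k)

include hr1 hr2 in
lemma delta_factor (i : Fin n) :
    ∃ P ∈ posBraidMonoid n, r Fin.revPerm = PresentedGroup.of i * P := by
  set w' := adjTransposition n i * (Fin.revPerm : Perm (Fin (n+1))) with hw'
  have heq : w' = (Fin.revPerm : Perm (Fin (n+1))) * adjTransposition n i.rev := by
    rw [hw', w0_mul_adj_eq i.rev, Fin.rev_rev]
  have hlw : wordLen n (Fin.revPerm : Perm (Fin (n+1)))
      = wordLen n w' + 1 := by
    rw [heq]
    exact wordLen_mul_adj_of_descent (w0_descent i.rev)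
  have hsplit : wordLen n (adjTransposition n i * w')
      = wordLen n (adjTransposition n i) + wordLen n w' := by
    have h1 : adjTransposition n i * w' = Fin.revPerm := by
      rw [hw', ← mul_assoc, adj_mul_self, one_mul]
    rw [h1, wordLen_adj]
    omega
  have hr := hr2 (adjTransposition n i) w' hsplit
  have h1 : adjTransposition n i * w' = Fin.revPerm := by
    rw [hw', ← mul_assoc, adj_mul_self, one_mul]
  rw [h1, hr1 i] at hr
  exact ⟨r w', r_mem_pos hr1 hr2 w', hr⟩

include hr1 hr2 in
lemma delta_conj (i : Fin n) :
    r Fin.revPerm * PresentedGroup.of (rels := braidRels n) i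
      = PresentedGroup.of (rels := braidRels n) i.rev * r Fin.revPerm := by
  have hlv : wordLen n (Fin.revPerm : Perm (Fin (n+1)))
      = wordLen n ((Fin.revPerm : Perm (Fin (n+1))) * adjTransposition n i) + 1 :=
    wordLen_mul_adj_of_descent (w0_descent i)
  have hsplit : wordLen n (((Fin.revPerm : Perm (Fin (n+1))) * adjTransposition n i) * adjTransposition n i)
      = wordLen n ((Fin.revPerm : Perm (Fin (n+1))) * adjTransposition n i)
        + wordLen n (adjTransposition n i) := by
    rw [mul_adj_mul_adj, wordLen_adj]
    omega
  have h1 := hr2 _ _ hsplit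
  rw [mul_adj_mul_adj, hr1 i] at h1
  have heq2 : adjTransposition n i.rev * (Fin.revPerm : Perm (Fin (n+1)))
      = (Fin.revPerm : Perm (Fin (n+1))) * adjTransposition n i := (w0_mul_adj_eq i).symm
  have h3 : adjTransposition n i.rev * ((Fin.revPerm : Perm (Fin (n+1))) * adjTransposition n i)
      = (Fin.revPerm : Perm (Fin (n+1))) := by
    rw [← heq2, ← mul_assoc, adj_mul_self, one_mul]
  have hsplit2 : wordLen n (adjTransposition n i.rev * ((Fin.revPerm : Perm (Fin (n+1))) * adjTransposition n i))
      = wordLen n (adjTransposition n i.rev)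
        + wordLen n ((Fin.revPerm : Perm (Fin (n+1))) * adjTransposition n i) := by
    rw [h3, wordLen_adj]
    omega
  have h2 := hr2 _ _ hsplit2
  rw [h3, hr1 i.rev] at h2
  conv_rhs => rw [h1]
  rw [← mul_assoc, ← h2]

include hr1 hr2 in
lemma pos_mul_delta {x : BraidGroup n} (hx : x ∈ posBraidMonoid n) :
    ∃ x' ∈ posBraidMonoid n, x * r Fin.revPerm = r Fin.revPerm * x' := by
  induction hx using Submonoid.closure_induction with
  | mem x hx =>
    obtain ⟨i, rfl⟩ := hx
    refine ⟨PresentedGroup.of i.rev, of_mem_pos i.rev, ?_⟩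
    have h := delta_conj hr1 hr2 i.rev
    rw [Fin.rev_rev] at h
    exact h.symm
  | one => exact ⟨1, one_mem _, by rw [one_mul, mul_one]⟩
  | mul x y hx hy ihx ihy =>
    obtain ⟨x', hx', hxe⟩ := ihx
    obtain ⟨y', hy', hye⟩ := ihy
    exact ⟨x' * y', mul_mem hx' hy', by
      rw [mul_assoc, hye, ← mul_assoc, hxe, mul_assoc]⟩

include hr1 hr2 in
lemma pos_mul_delta_pow {x : BraidGroup n} (hx : x ∈ posBraidMonoid n) (k : ℕ) :
    ∃ x' ∈ posBraidMonoid n, x * (r Fin.revPerm) ^ k = (r Fin.revPerm) ^ k * x' := by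
  induction k generalizing x with
  | zero => exact ⟨x, hx, by simp⟩
  | succ k ih =>
    obtain ⟨x', hx', hxe⟩ := pos_mul_delta hr1 hr2 hx
    obtain ⟨x'', hx'', hxe'⟩ := ih hx'
    refine ⟨x'', hx'', ?_⟩
    rw [pow_succ', ← mul_assoc, hxe, mul_assoc, hxe', ← mul_assoc, ← pow_succ']

include hr1 hr2 in
lemma pos_dvd_delta_pow {x : BraidGroup n} (hx : x ∈ posBraidMonoid n) :
    ∃ k : ℕ, ∃ z ∈ posBraidMonoid n, x * z = (r Fin.revPerm) ^ k := by
  obtain ⟨l, hl, hprod⟩ := Submonoid.exists_list_of_mem_closure hx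
  clear hx
  induction l generalizing x with
  | nil => exact ⟨0, 1, one_mem _, by rw [← hprod]; simp⟩
  | cons a l ih =>
    obtain ⟨i, rfl⟩ : ∃ i, PresentedGroup.of (rels := braidRels n) i = a :=
      hl a List.mem_cons_self
    obtain ⟨k, z, hz, hze⟩ := ih (fun y hy => hl y (List.mem_cons_of_mem _ hy)) rfl
    obtain ⟨P, hP, hPe⟩ := delta_factor hr1 hr2 i
    obtain ⟨P', hP', hPe'⟩ := pos_mul_delta_pow hr1 hr2 hP k
    refine ⟨k + 1, z * P', mul_mem hz hP', ?_⟩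
    rw [← hprod, List.prod_cons]
    calc PresentedGroup.of i * l.prod * (z * P')
        = PresentedGroup.of i * (l.prod * z) * P' := by group
      _ = PresentedGroup.of i * (r Fin.revPerm) ^ k * P' := by rw [hze]
      _ = PresentedGroup.of i * P * (r Fin.revPerm) ^ k := by
          rw [mul_assoc, ← hPe', mul_assoc]
      _ = r Fin.revPerm * (r Fin.revPerm) ^ k := by rw [← hPe]
      _ = (r Fin.revPerm) ^ (k + 1) := by rw [← pow_succ']

include hr1 hr2 in
lemma common_right_multiple {x y : BraidGroup n}
    (hx : x ∈ posBraidMonoid n) (hy : y ∈ posBraidMonoid n) :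
    ∃ a ∈ posBraidMonoid n, ∃ b ∈ posBraidMonoid n, x * a = y * b := by
  obtain ⟨k, z, hz, hze⟩ := pos_dvd_delta_pow hr1 hr2 hx
  obtain ⟨m, z', hz', hze'⟩ := pos_dvd_delta_pow hr1 hr2 hy
  have hdp : (r Fin.revPerm : BraidGroup n) ∈ posBraidMonoid n := r_mem_pos hr1 hr2 _
  refine ⟨z * (r Fin.revPerm) ^ m, mul_mem hz (pow_mem hdp m),
    z' * (r Fin.revPerm) ^ k, mul_mem hz' (pow_mem hdp k), ?_⟩
  rw [← mul_assoc, hze, ← mul_assoc, hze']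
  exact pow_mul_comm _ _ _

include hr1 hr2 in
lemma exists_fraction (g : BraidGroup n) :
    ∃ x ∈ posBraidMonoid n, ∃ y ∈ posBraidMonoid n, g = x * y⁻¹ := by
  have hg : g ∈ Subgroup.closure (Set.range (PresentedGroup.of : Fin n → BraidGroup n)) := by
    rw [PresentedGroup.closure_range_of]; trivial
  induction hg using Subgroup.closure_induction with
  | mem x hx =>
    obtain ⟨i, rfl⟩ := hx
    exact ⟨PresentedGroup.of i, of_mem_pos i, 1, one_mem _, by simp⟩
  | one => exact ⟨1, one_mem _, 1, one_mem _, by simp⟩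
  | mul g h _ _ ihg ihh =>
    obtain ⟨x, hx, y, hy, rfl⟩ := ihg
    obtain ⟨x', hx', y', hy', rfl⟩ := ihh
    obtain ⟨a, ha, b, hb, habe⟩ := common_right_multiple hr1 hr2 hy hx'
    refine ⟨x * a, mul_mem hx ha, y' * b, mul_mem hy' hb, ?_⟩
    have hab : y⁻¹ * x' = a * b⁻¹ := by
      have hx'2 : x' = y * a * b⁻¹ := by rw [habe]; group
      rw [hx'2]; group
    calc x * y⁻¹ * (x' * y'⁻¹) = x * (y⁻¹ * x') * y'⁻¹ := by group
      _ = x * (a * b⁻¹) * y'⁻¹ := by rw [hab]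
      _ = x * a * (y' * b)⁻¹ := by group
  | inv g _ ihg =>
    obtain ⟨x, hx, y, hy, rfl⟩ := ihg
    exact ⟨y, hy, x, hx, by group⟩

end WithR

lemma pos_exists_list {n : ℕ} {x : BraidGroup n} (hx : x ∈ posBraidMonoid n) :
    ∃ l : List (Fin n),
      (l.map fun i => PresentedGroup.of (rels := braidRels n) i).prod = x := by
  obtain ⟨l, hl, hprod⟩ := Submonoid.exists_list_of_mem_closure hx
  clear hx
  induction l generalizing x with
  | nil => exact ⟨[], by simpa using hprod⟩
  | cons a l ih =>
    obtain ⟨l', hl'⟩ := ih (fun y hy => hl y (List.mem_cons_of_mem _ hy)) rfl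
    obtain ⟨i, hi⟩ := hl a List.mem_cons_self
    exact ⟨i :: l', by rw [List.map_cons, List.prod_cons, hl', ← hprod, List.prod_cons, ← hi]⟩


end KB

/-- Krammer's faithfulness criterion (Lemma 3.6): let the braid group `B_{n+1}` act on a
set `U`, let `r : S_{n+1} → B_{n+1}` be the canonical section with image `Ω`, and let `LF`
be the leftmost-factor map on the positive braid monoid. If there are nonempty pairwise
disjoint subsets `{C_w ⊆ U}_{w ∈ Ω}` with `x • C_y ⊆ C_{LF(xy)}` for all `x, y ∈ Ω`, then
the action of `B_{n+1}` on `U` is faithful. -/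
theorem krammer_faithfulness_criterion (n : ℕ) {U : Type*} [MulAction (BraidGroup n) U]
    (r : Equiv.Perm (Fin (n + 1)) → BraidGroup n)
    (hr1 : ∀ i : Fin n, r (adjTransposition n i) = PresentedGroup.of i)
    (hr2 : ∀ x y : Equiv.Perm (Fin (n + 1)),
      wordLen n (x * y) = wordLen n x + wordLen n y → r (x * y) = r x * r y)
    (LF : BraidGroup n → BraidGroup n)
    (hLF : ∀ x ∈ posBraidMonoid n, ∃ x' : Equiv.Perm (Fin (n + 1)),
      LF x = r x' ∧ (∃ z ∈ posBraidMonoid n, x = r x' * z) ∧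
      ∀ y' : Equiv.Perm (Fin (n + 1)),
        (∃ z ∈ posBraidMonoid n, x = r y' * z) → wordLen n y' ≤ wordLen n x')
    (C : BraidGroup n → Set U)
    (hne : ∀ w ∈ Set.range r, (C w).Nonempty)
    (hdisj : ∀ w ∈ Set.range r, ∀ w' ∈ Set.range r, w ≠ w' → Disjoint (C w) (C w'))
    (hact : ∀ x ∈ Set.range r, ∀ y ∈ Set.range r, ∀ u ∈ C y, x • u ∈ C (LF (x * y))) :
    ∀ g h : BraidGroup n, (∀ u : U, g • u = h • u) → g = h := by

  intro g h hgh
  have hone : r 1 = 1 := KB.r_one hr2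
  have hr_range_one : (1 : BraidGroup n) ∈ Set.range r := ⟨1, hone⟩
  -- Lemma: a positive braid maps C 1 into C (r w) for a left divisor r w (nontrivial if x ≠ 1)
  have lemA : ∀ l : List (Fin n), ∀ u ∈ C 1,
      ∃ w : Equiv.Perm (Fin (n+1)),
        ((l.map fun i => PresentedGroup.of (rels := braidRels n) i).prod) • u ∈ C (r w) ∧
        (∃ z ∈ posBraidMonoid n,
          (l.map fun i => PresentedGroup.of (rels := braidRels n) i).prod = r w * z) ∧
        (l = [] ∨ 1 ≤ wordLen n w) := by
    intro l
    induction l with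
    | nil =>
      intro u hu
      exact ⟨1, by simpa [hone] using hu, ⟨1, one_mem _, by simp [hone]⟩, Or.inl rfl⟩
    | cons i l ih =>
      intro u hu
      obtain ⟨w', hw'C, ⟨z₁, hz₁, hz₁e⟩, -⟩ := ih u hu
      have hxact := hact (PresentedGroup.of i) ⟨_, hr1 i⟩ (r w') ⟨w', rfl⟩ _ hw'C
      have hmem : PresentedGroup.of (rels := braidRels n) i * r w' ∈ posBraidMonoid n :=
        mul_mem (KB.of_mem_pos i) (KB.r_mem_pos hr1 hr2 w')
      obtain ⟨v, hveq, ⟨z₂, hz₂, hz₂e⟩, hmax⟩ := hLF _ hmem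
      refine ⟨v, ?_, ⟨z₂ * z₁, mul_mem hz₂ hz₁, ?_⟩, Or.inr ?_⟩
      · rw [List.map_cons, List.prod_cons, mul_smul, ← hveq]
        exact hxact
      · rw [List.map_cons, List.prod_cons, hz₁e, ← mul_assoc, hz₂e, mul_assoc]
      · have h1 : ∃ z ∈ posBraidMonoid n,
            PresentedGroup.of (rels := braidRels n) i * r w' = r (adjTransposition n i) * z :=
          ⟨r w', KB.r_mem_pos hr1 hr2 w', by rw [hr1 i]⟩
        have h2 := hmax _ h1
        rwa [KB.wordLen_adj] at h2
  have lemA' : ∀ x ∈ posBraidMonoid n, ∀ u ∈ C 1,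
      ∃ w : Equiv.Perm (Fin (n+1)), x • u ∈ C (r w) ∧
        (∃ z ∈ posBraidMonoid n, x = r w * z) ∧ (x = 1 ∨ 1 ≤ wordLen n w) := by
    intro x hx u hu
    obtain ⟨l, hprod⟩ := KB.pos_exists_list hx
    obtain ⟨w, h1, h2, h3⟩ := lemA l u hu
    rw [hprod] at h1 h2
    refine ⟨w, h1, h2, ?_⟩
    rcases h3 with hnil | h3
    · subst hnil
      exact Or.inl (by simpa using hprod.symm)
    · exact Or.inr h3
  -- Claim B: the action of positive braids is determined on C 1
  have claimB : ∀ N : ℕ, ∀ x ∈ posBraidMonoid n, ∀ y ∈ posBraidMonoid n,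
      KB.ell x + KB.ell y ≤ (N : ℤ) → (∀ u ∈ C 1, x • u = y • u) → x = y := by
    intro N
    induction N with
    | zero =>
      intro x hx y hy hsum _
      have h1 := KB.ell_nonneg hx
      have h2 := KB.ell_nonneg hy
      rw [KB.pos_eq_one_of_ell_eq_zero hx (by omega),
        KB.pos_eq_one_of_ell_eq_zero hy (by omega)]
    | succ N ih =>
      intro x hx y hy hsum hagree
      obtain ⟨u₀, hu₀⟩ := hne 1 hr_range_one
      obtain ⟨w, hwC, ⟨z, hz, hze⟩, hw1⟩ := lemA' x hx u₀ hu₀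
      obtain ⟨w', hw'C, ⟨z', hz', hz'e⟩, hw'1⟩ := lemA' y hy u₀ hu₀
      have heqw : r w = r w' := by
        by_contra hc
        have hd := hdisj (r w) ⟨w, rfl⟩ (r w') ⟨w', rfl⟩ hc
        have hagree₀ := hagree u₀ hu₀
        exact Set.disjoint_left.mp hd hwC (hagree₀ ▸ hw'C)
      have hellw : KB.ell (r w) = (wordLen n w : ℤ) := KB.ell_r hr1 hr2 w
      have hellw' : KB.ell (r w') = (wordLen n w' : ℤ) := KB.ell_r hr1 hr2 w'
      rcases hw1 with rfl | hw1
      · rcases hw'1 with rfl | hw'1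
        · rfl
        · exfalso
          have hrne : (1 : BraidGroup n) ≠ r w' := by
            intro hcon
            rw [← hcon] at hellw'
            simp only [KB.ell_one] at hellw'
            omega
          have hd := hdisj 1 hr_range_one (r w') ⟨w', rfl⟩ hrne
          have hu' : u₀ ∈ C (r w') := by
            have h := hagree u₀ hu₀
            rw [one_smul] at h
            exact h ▸ hw'C
          exact Set.disjoint_left.mp hd hu₀ hu'
      · rcases hw'1 with rfl | hw'1
        · exfalso
          have hrne : (1 : BraidGroup n) ≠ r w := by
            intro hcon
            rw [← hcon] at hellw
            simp only [KB.ell_one] at hellw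
            omega
          have hd := hdisj 1 hr_range_one (r w) ⟨w, rfl⟩ hrne
          have hu' : u₀ ∈ C (r w) := by
            have h := hagree u₀ hu₀
            rw [one_smul] at h
            exact h ▸ hwC
          exact Set.disjoint_left.mp hd hu₀ hu'
        · have hz'e2 : y = r w * z' := by rw [hz'e, ← heqw]
          have hcancel : ∀ u ∈ C 1, z • u = z' • u := by
            intro u hu
            have hag := hagree u hu
            rw [hze, hz'e2, mul_smul, mul_smul] at hag
            exact MulAction.injective (r w) hag
          have hlx : KB.ell x = KB.ell (r w) + KB.ell z := by rw [hze, KB.ell_mul]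
          have hly : KB.ell y = KB.ell (r w) + KB.ell z' := by rw [hz'e2, KB.ell_mul]
          have heq := ih z hz z' hz' (by rw [heqw] at hlx hly; omega) hcancel
          rw [hze, hz'e2, heq]
  -- conclude
  obtain ⟨x, hx, y, hy, hgxy⟩ := KB.exists_fraction hr1 hr2 g
  obtain ⟨x', hx', y', hy', hhxy⟩ := KB.exists_fraction hr1 hr2 h
  obtain ⟨a, ha, b, hb, habe⟩ := KB.common_right_multiple hr1 hr2 hy hy'
  have key : ∀ v : U, (x * a) • v = (x' * b) • v := by
    intro v
    have h1 : (x * a) • v = g • ((y * a) • v) := by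
      rw [smul_smul, hgxy]
      congr 1
      group
    have h2 : (x' * b) • v = h • ((y' * b) • v) := by
      rw [smul_smul, hhxy]
      congr 1
      group
    rw [h1, h2, ← habe, hgh]
  have hfin : x * a = x' * b :=
    claimB (KB.ell (x * a) + KB.ell (x' * b)).toNat (x * a) (mul_mem hx ha)
      (x' * b) (mul_mem hx' hb) (Int.self_le_toNat _) (fun u _ => key u)
  calc g = (x * a) * (y * a)⁻¹ := by rw [hgxy]; group
    _ = (x' * b) * (y' * b)⁻¹ := by rw [hfin, habe]
    _ = h := by rw [hhxy]; group
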